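/- Let f : ℝ → ℝ be 1-periodic and continuously differentiable with max(sup|f|, sup|f'|) ≤ 1, let K ≥ 1, and let ω ∈ ℝ be irrational with β(ω) > 40K. Then for every θ ∈ ℝ and every E ∈ ℝ with |E| ≤ 4·e^{K}, there is no nonzero u ∈ ℓ²(ℤ) satisfying −u_{n+1} − u_{n−1} + V(θ + nω)·u_n = E·u_n for all n ∈ ℤ. In particular, the operator H_{K,θ,ω} has no eigenvalues in [−4e^{K}, 4e^{K}]. -/

import Mathlib

open Real Filter

/-- Distance from a real number to the nearest integer. -/
noncomputable def distToInt (x : ℝ) : ℝ := |x - round x|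

/-- `β(ω) = limsup_{n→∞} (-log ‖nω‖_ℤ)/n ∈ [0,∞]`, with the convention `-log 0 = +∞`. -/
noncomputable def betaExp (ω : ℝ) : EReal :=
  Filter.limsup
    (fun n : ℕ => if distToInt (n * ω) = 0 then (⊤ : EReal)
      else ((-Real.log (distToInt (n * ω)) / n : ℝ) : EReal)) atTop

/-- The potential `V(θ) = exp(K f(θ+ω)) + exp(-K f(θ))`. -/
noncomputable def pot (f : ℝ → ℝ) (K ω θ : ℝ) : ℝ :=
  Real.exp (K * f (θ + ω)) + Real.exp (-(K * f θ))

/-! ### Auxiliary material: matrices with the `L∞` operator norm -/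

attribute [local instance] Matrix.linftyOpNormedRing Matrix.linftyOpNormedAlgebra
  Matrix.linftyOpNormedSpace

/-- 2×2 complex matrices. -/
abbrev GM2 := Matrix (Fin 2) (Fin 2) ℂ

lemma gnormM2 (X : GM2) : ‖X‖ = max (‖X 0 0‖ + ‖X 0 1‖) (‖X 1 0‖ + ‖X 1 1‖) := by
  rw [Matrix.linfty_opNorm_def]
  have : (Finset.univ : Finset (Fin 2)) = {0, 1} := rfl
  rw [this, Finset.sup_insert, Finset.sup_singleton]
  push_cast
  simp [Finset.sum_pair (by decide : (0:Fin 2) ≠ 1)]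

lemma gnorm_single (x : ℂ) : ‖(!![x, 0; 0, 0] : GM2)‖ = ‖x‖ := by
  rw [gnormM2]; simp [max_eq_left, norm_nonneg]

lemma gnormA (x : ℂ) : ‖(!![x, -1; 1, 0] : GM2)‖ = max (‖x‖ + 1) 1 := by
  rw [gnormM2]; simp

lemma gch2 (T : GM2) (h : T.det = 1) : T * T = T.trace • T - 1 := by
  ext i j
  rw [Matrix.det_fin_two] at h
  fin_cases i <;> fin_cases j <;>
    simp [Matrix.mul_apply, Fin.sum_univ_two, Matrix.trace_fin_two, Matrix.one_apply] <;>
    first | linear_combination -h | linear_combination h | ring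

lemma gsinv2 (T : GM2) (h : T.det = 1) : (T.trace • (1 : GM2) - T) * T = 1 := by
  ext i j
  rw [Matrix.det_fin_two] at h
  fin_cases i <;> fin_cases j <;>
    simp [Matrix.mul_apply, Fin.sum_univ_two, Matrix.trace_fin_two, Matrix.one_apply] <;>
    first | linear_combination -h | linear_combination h | ring

lemma gtrace_le (X : GM2) : ‖X.trace‖ ≤ 2 * ‖X‖ := by
  rw [Matrix.trace_fin_two, gnormM2]
  have := norm_add_le (X 0 0) (X 1 1)
  have h1 : ‖X 0 0‖ ≤ max (‖X 0 0‖ + ‖X 0 1‖) (‖X 1 0‖ + ‖X 1 1‖) :=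
    le_max_of_le_left (le_add_of_nonneg_right (norm_nonneg _))
  have h2 : ‖X 1 1‖ ≤ max (‖X 0 0‖ + ‖X 0 1‖) (‖X 1 0‖ + ‖X 1 1‖) :=
    le_max_of_le_right (le_add_of_nonneg_left (norm_nonneg _))
  linarith

/-- Products of transfer matrices, `gTPr g m k = g (m+k-1) * ⋯ * g m`. -/
noncomputable def gTPr (g : ℤ → GM2) (m : ℤ) : ℕ → GM2
  | 0 => 1
  | k + 1 => g (m + k) * gTPr g m k

lemma gTPr_mulVec (g : ℤ → GM2) (v : ℤ → Fin 2 → ℂ)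
    (hstep : ∀ j : ℤ, (g j).mulVec (v j) = v (j + 1)) (m : ℤ) :
    ∀ k : ℕ, (gTPr g m k).mulVec (v m) = v (m + k)
  | 0 => by simp [gTPr]
  | k + 1 => by
    rw [gTPr, ← Matrix.mulVec_mulVec, gTPr_mulVec g v hstep m k, hstep (m + k)]
    congr 1
    push_cast
    ring

lemma gTPr_det (g : ℤ → GM2) (hdet : ∀ j, (g j).det = 1) (m : ℤ) :
    ∀ k : ℕ, (gTPr g m k).det = 1
  | 0 => by simp [gTPr]
  | k + 1 => by rw [gTPr, Matrix.det_mul, hdet, gTPr_det g hdet m k, one_mul]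

lemma gTPr_norm_le (g : ℤ → GM2) (M : ℝ) (hg : ∀ j, ‖g j‖ ≤ M) (m : ℤ) :
    ∀ k : ℕ, ‖gTPr g m k‖ ≤ M ^ k
  | 0 => by simp [gTPr]
  | k + 1 => by
    calc ‖gTPr g m (k+1)‖ ≤ ‖g (m + k)‖ * ‖gTPr g m k‖ := norm_mul_le _ _
    _ ≤ M * M ^ k := by
        refine mul_le_mul (hg _) (gTPr_norm_le g M hg m k) (norm_nonneg _) ?_
        exact (norm_nonneg (g (m+k))).trans (hg (m+k))
    _ = M ^ (k+1) := by ring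

lemma gTPr_sub (g : ℤ → GM2) (m m' : ℤ) (M δ : ℝ) (hM : 1 ≤ M) (hδ : 0 ≤ δ)
    (hg : ∀ j, ‖g j‖ ≤ M) (hd : ∀ j : ℤ, ‖g (m' + j) - g (m + j)‖ ≤ δ) :
    ∀ k : ℕ, ‖gTPr g m' k - gTPr g m k‖ ≤ k * M ^ k * δ
  | 0 => by simp [gTPr]
  | k + 1 => by
    have hM0 : (0:ℝ) ≤ M := zero_le_one.trans hM
    have key : gTPr g m' (k+1) - gTPr g m (k+1)
        = g (m' + k) * (gTPr g m' k - gTPr g m k) + (g (m' + k) - g (m + k)) * gTPr g m k := by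
      rw [gTPr, gTPr]; noncomm_ring
    calc ‖gTPr g m' (k+1) - gTPr g m (k+1)‖
        ≤ ‖g (m' + k) * (gTPr g m' k - gTPr g m k)‖
            + ‖(g (m' + k) - g (m + k)) * gTPr g m k‖ := by
          rw [key]; exact norm_add_le _ _
      _ ≤ M * (k * M ^ k * δ) + δ * M ^ k := by
          have h1 := norm_mul_le (g (m' + k)) (gTPr g m' k - gTPr g m k)
          have h2 := norm_mul_le (g (m' + k) - g (m + k)) (gTPr g m k)
          have h3 := gTPr_sub g m m' M δ hM hδ hg hd k
          have h4 := gTPr_norm_le g M hg m k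
          have h5 := hg (m' + k)
          have h6 := hd (k : ℤ)
          have hMk : (0:ℝ) ≤ M ^ k := pow_nonneg hM0 k
          have hnn : (0:ℝ) ≤ ‖gTPr g m' k - gTPr g m k‖ := norm_nonneg _
          have hnn2 : (0:ℝ) ≤ ‖gTPr g m k‖ := norm_nonneg _
          have hnn3 : (0:ℝ) ≤ ‖g (m' + k)‖ := norm_nonneg _
          nlinarith [norm_nonneg (g (m' + k) - g (m + k))]
      _ ≤ (k+1) * M ^ (k+1) * δ := by
          have hMk : (0:ℝ) ≤ M ^ k := pow_nonneg hM0 k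
          have : M ^ k ≤ M ^ (k+1) := by
            calc M ^ k = 1 * M ^ k := (one_mul _).symm
            _ ≤ M * M ^ k := by gcongr
            _ = M ^ (k+1) := by ring
          have hk : (0:ℝ) ≤ (k:ℝ) := Nat.cast_nonneg k
          have e1 : M * ((k:ℝ) * M ^ k * δ) = (k:ℝ) * M ^ (k+1) * δ := by ring
          have e2 : δ * M ^ k ≤ δ * M ^ (k+1) := mul_le_mul_of_nonneg_left this hδ
          nlinarith [pow_nonneg hM0 (k+1)]
      _ = (↑(k+1)) * M ^ (k+1) * δ := by push_cast; ring

/-! ### Auxiliary material: the potential -/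

section potlem
variable {f : ℝ → ℝ} (hf_per : ∀ x : ℝ, f (x + 1) = f x)
  (hf_C1 : ContDiff ℝ 1 f) (hf_bd : ∀ x : ℝ, |f x| ≤ 1)
  (hf_bd' : ∀ x : ℝ, |deriv f x| ≤ 1) {K : ℝ} (hK : 1 ≤ K) (ω : ℝ)

include hf_bd hK in
lemma pot_bd : ∀ x, |pot f K ω x| ≤ 2 * Real.exp K := by
  intro x
  have h0 : (0:ℝ) < K := lt_of_lt_of_le one_pos hK
  have h1 : Real.exp (K * f (x + ω)) ≤ Real.exp K := by
    apply Real.exp_le_exp.2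
    have := abs_le.1 (hf_bd (x + ω))
    nlinarith
  have h2 : Real.exp (-(K * f x)) ≤ Real.exp K := by
    apply Real.exp_le_exp.2
    have := abs_le.1 (hf_bd x)
    nlinarith
  have p1 := Real.exp_pos (K * f (x + ω))
  have p2 := Real.exp_pos (-(K * f x))
  unfold pot
  rw [abs_of_pos (by positivity)]
  linarith

include hf_per in
lemma pot_per : ∀ (x : ℝ) (p : ℤ), pot f K ω (x + p) = pot f K ω x := by
  have hper : Function.Periodic f 1 := hf_per
  intro x p
  have hfp : ∀ y : ℝ, f (y + p) = f y := by
    intro y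
    have := (hper.int_mul p) y
    simpa using this
  unfold pot
  rw [show x + (p:ℝ) + ω = x + ω + (p:ℝ) by ring, hfp, hfp]

include hf_C1 hf_bd hf_bd' hK in
lemma pot_lip : ∀ x y : ℝ, |pot f K ω x - pot f K ω y| ≤ 2 * K * Real.exp K * |x - y| := by
  have h0 : (0:ℝ) < K := lt_of_lt_of_le one_pos hK
  have hfd : Differentiable ℝ f := hf_C1.differentiable one_ne_zero
  have hD : ∀ x : ℝ, HasDerivAt (pot f K ω)
      (Real.exp (K * f (x + ω)) * (K * (deriv f (x + ω) * 1)) +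
        -(Real.exp (-(K * f x)) * (K * deriv f x))) x := by
    intro x
    have h1 : HasDerivAt (fun y : ℝ => f (y + ω)) (deriv f (x + ω) * 1) x :=
      (hfd (x + ω)).hasDerivAt.comp x ((hasDerivAt_id x).add_const ω)
    have h2 : HasDerivAt (fun y : ℝ => Real.exp (K * f (y + ω)))
        (Real.exp (K * f (x + ω)) * (K * (deriv f (x + ω) * 1))) x := (h1.const_mul K).exp
    have h3 : HasDerivAt (fun y : ℝ => Real.exp (-(K * f y)))
        (Real.exp (-(K * f x)) * -(K * deriv f x)) x :=
      (((hfd x).hasDerivAt.const_mul K).neg).exp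
    have := h2.add h3
    rw [show pot f K ω = ((fun y : ℝ => Real.exp (K * f (y + ω))) + fun y : ℝ => Real.exp (-(K * f y))) from rfl]
    simpa [mul_comm, mul_assoc, mul_neg] using this
  have hdiff : Differentiable ℝ (pot f K ω) := fun x => (hD x).differentiableAt
  have hbound : ∀ x : ℝ, ‖deriv (pot f K ω) x‖₊ ≤ Real.toNNReal (2 * K * Real.exp K) := by
    intro x
    rw [← NNReal.coe_le_coe]
    have hd := (hD x).deriv
    have e1 : Real.exp (K * f (x + ω)) ≤ Real.exp K := by
      apply Real.exp_le_exp.2; have := abs_le.1 (hf_bd (x + ω)); nlinarith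
    have e2 : Real.exp (-(K * f x)) ≤ Real.exp K := by
      apply Real.exp_le_exp.2; have := abs_le.1 (hf_bd x); nlinarith
    have p1 := Real.exp_pos (K * f (x + ω))
    have p2 := Real.exp_pos (-(K * f x))
    have : |deriv (pot f K ω) x| ≤ 2 * K * Real.exp K := by
      rw [hd]
      have b1 : |Real.exp (K * f (x + ω)) * (K * (deriv f (x + ω) * 1))| ≤ K * Real.exp K := by
        rw [abs_mul, abs_of_pos p1, mul_one, abs_mul, abs_of_pos h0]
        have hK1 : K * |deriv f (x + ω)| ≤ K * 1 :=
          mul_le_mul_of_nonneg_left (hf_bd' _) (le_of_lt h0)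
        have := mul_le_mul e1 hK1 (by positivity) (le_of_lt (Real.exp_pos K))
        nlinarith
      have b2 : |-(Real.exp (-(K * f x)) * (K * deriv f x))| ≤ K * Real.exp K := by
        rw [abs_neg, abs_mul, abs_of_pos p2, abs_mul, abs_of_pos h0]
        have hK1 : K * |deriv f x| ≤ K * 1 :=
          mul_le_mul_of_nonneg_left (hf_bd' _) (le_of_lt h0)
        have := mul_le_mul e2 hK1 (by positivity) (le_of_lt (Real.exp_pos K))
        nlinarith
      calc |_ + _| ≤ _ := abs_add_le _ _
      _ ≤ 2 * K * Real.exp K := by linarith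
    rwa [Real.coe_toNNReal _ (by positivity), coe_nnnorm, Real.norm_eq_abs]
  intro x y
  have := (lipschitzWith_of_nnnorm_deriv_le hdiff hbound).dist_le_mul x y
  rwa [Real.dist_eq, Real.dist_eq, Real.coe_toNNReal _ (by positivity)] at this

end potlem

/-! ### Auxiliary numeric lemma -/

lemma gnumer {K : ℝ} (hK : 1 ≤ K) {q : ℕ} (hq : 1 ≤ q) {d : ℝ} (hd0 : 0 ≤ d)
    (hd : d ≤ Real.exp (-(40 * K * q))) :
    (q : ℝ) * Real.exp (3 * K) ^ q * (2 * K * Real.exp K * d) ≤ Real.exp (-(33 * K * q)) ∧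
      Real.exp (-(33 * K * q)) ≤ 1 / 12 := by
  have hK0 : (0:ℝ) < K := lt_of_lt_of_le one_pos hK
  have hq1 : (1:ℝ) ≤ (q:ℝ) := by exact_mod_cast hq
  constructor
  · have e0 : Real.exp (3 * K) ^ q = Real.exp (3 * K * q) := by
      rw [← Real.exp_nat_mul]; ring_nf
    have h1 : (q:ℝ) ≤ Real.exp (K * q) := by
      calc (q:ℝ) ≤ (q:ℝ) + 1 := by linarith
      _ ≤ Real.exp q := Real.add_one_le_exp q
      _ ≤ Real.exp (K * q) := by apply Real.exp_le_exp.2; nlinarith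
    have h2 : 2 * K ≤ Real.exp (2 * K) := by
      calc 2 * K ≤ 2 * K + 1 := by linarith
      _ ≤ Real.exp (2 * K) := Real.add_one_le_exp _
    calc (q : ℝ) * Real.exp (3 * K) ^ q * (2 * K * Real.exp K * d)
        ≤ Real.exp (K * q) * Real.exp (3 * K * q) *
            (Real.exp (2 * K) * Real.exp K * Real.exp (-(40 * K * q))) := by
          rw [e0]
          apply mul_le_mul
          · apply mul_le_mul h1 le_rfl (Real.exp_pos _).le (Real.exp_pos _).le
          · apply mul_le_mul _ hd hd0 (by positivity)
            apply mul_le_mul h2 le_rfl (Real.exp_pos _).le (Real.exp_pos _).le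
          · positivity
          · positivity
      _ = Real.exp (K * q + 3 * K * q + (2 * K + K + -(40 * K * q))) := by
          rw [Real.exp_add, Real.exp_add, Real.exp_add, Real.exp_add]
      _ ≤ Real.exp (-(33 * K * q)) := by
          apply Real.exp_le_exp.2; nlinarith
  · calc Real.exp (-(33 * K * q)) ≤ Real.exp (-33) := by
          apply Real.exp_le_exp.2; nlinarith
    _ ≤ 1 / 12 := by
        rw [Real.exp_neg, show (1:ℝ)/12 = (12:ℝ)⁻¹ by norm_num]
        have h12 : (12:ℝ) ≤ rexp 33 := by linarith [Real.add_one_le_exp (33:ℝ)]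
        exact inv_anti₀ (by norm_num) h12

/-- Gordon-type absence of point spectrum: if `f` is 1-periodic and `C¹` with
`max(sup|f|, sup|f'|) ≤ 1`, `K ≥ 1`, and `ω` is irrational with `β(ω) > 40K`, then for
every `θ` and every `|E| ≤ 4 e^K` there is no nonzero `ℓ²(ℤ)` solution of
`-u_{n+1} - u_{n-1} + V(θ+nω) u_n = E u_n`; in particular `H_{K,θ,ω}` has no eigenvalues
in `[-4e^K, 4e^K]`. -/
theorem statement9 (f : ℝ → ℝ) (hf_per : ∀ x : ℝ, f (x + 1) = f x)
    (hf_C1 : ContDiff ℝ 1 f) (hf_bd : ∀ x : ℝ, |f x| ≤ 1)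
    (hf_bd' : ∀ x : ℝ, |deriv f x| ≤ 1)
    (K : ℝ) (hK : 1 ≤ K) (ω : ℝ) (hω : Irrational ω)
    (hβ : ((40 * K : ℝ) : EReal) < betaExp ω) :
    ∀ θ E : ℝ, |E| ≤ 4 * Real.exp K →
      (∀ u : lp (fun _ : ℤ => ℂ) 2,
        (∀ n : ℤ, -u (n + 1) - u (n - 1) + (pot f K ω (θ + n * ω) : ℂ) * u n = (E : ℂ) * u n) →
        u = 0) ∧
      (∀ H : lp (fun _ : ℤ => ℂ) 2 →L[ℂ] lp (fun _ : ℤ => ℂ) 2,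
        (∀ (u : lp (fun _ : ℤ => ℂ) 2) (n : ℤ),
          H u n = -u (n + 1) - u (n - 1) + (pot f K ω (θ + n * ω) : ℂ) * u n) →
        ∀ u : lp (fun _ : ℤ => ℂ) 2, H u = (E : ℂ) • u → u = 0) := by
  intro θ E hE
  have hK0 : (0:ℝ) < K := lt_of_lt_of_le one_pos hK
  have key : ∀ u : lp (fun _ : ℤ => ℂ) 2,
      (∀ n : ℤ, -u (n + 1) - u (n - 1) + (pot f K ω (θ + n * ω) : ℂ) * u n = (E : ℂ) * u n) →
      u = 0 := by
    intro u hu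
    obtain ⟨a, ha⟩ : ∃ a : ℤ → ℂ, ∀ n : ℤ,
        a n = ((pot f K ω (θ + n * ω) : ℝ) : ℂ) - (E : ℂ) := ⟨_, fun n => rfl⟩
    have hrec : ∀ n : ℤ, u (n + 1) = a n * u n - u (n - 1) := by
      intro n; rw [ha]; linear_combination -(hu n)
    have hrecb : ∀ n : ℤ, u (n - 1) = a n * u n - u (n + 1) := by
      intro n; rw [ha]; linear_combination -(hu n)
    have hzero : u 0 = 0 → u (-1) = 0 → u = 0 := by
      intro h0 h1
      have hall : ∀ n : ℤ, u n = 0 ∧ u (n - 1) = 0 := by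
        intro n
        induction n using Int.induction_on with
        | zero => exact ⟨h0, by rw [zero_sub]; exact h1⟩
        | succ k ih =>
          refine ⟨?_, by simpa using ih.1⟩
          rw [hrec (k : ℤ), ih.1, ih.2]; ring
        | pred k ih =>
          refine ⟨by simpa using ih.2, ?_⟩
          have e := hrecb (-(k : ℤ) - 1)
          rw [show (-(k:ℤ) - 1 + 1) = -(k:ℤ) by ring] at e
          rw [e, ih.1, ih.2]; ring
      apply lp.ext
      funext n
      simpa using (hall n).1
    by_contra hune
    obtain ⟨v, hv⟩ : ∃ v : ℤ → Fin 2 → ℂ, ∀ n : ℤ, v n = ![u n, u (n - 1)] :=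
      ⟨_, fun n => rfl⟩
    have hv0ne : v 0 ≠ 0 := by
      intro h
      apply hune
      apply hzero
      · have := congrFun h 0; rw [hv] at this; simpa using this
      · have := congrFun h 1; rw [hv] at this
        simpa using this
    have hc : 0 < ‖v 0‖ := norm_pos_iff.2 hv0ne
    set c := ‖v 0‖ with hcdef
    -- transfer matrices
    obtain ⟨A, hA⟩ : ∃ A : ℤ → GM2, ∀ n : ℤ, A n = !![a n, -1; 1, 0] := ⟨_, fun n => rfl⟩
    have hstep : ∀ n : ℤ, (A n).mulVec (v n) = v (n + 1) := by
      intro n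
      funext i
      rw [hA, hv, hv]
      fin_cases i
      · show ((!![a n, -1; 1, 0] : GM2).mulVec ![u n, u (n - 1)]) 0 = _
        simp [Matrix.mulVec, dotProduct, Fin.sum_univ_two]
        rw [hrec n]; ring
      · show ((!![a n, -1; 1, 0] : GM2).mulVec ![u n, u (n - 1)]) 1 = _
        simp [Matrix.mulVec, dotProduct, Fin.sum_univ_two]
    have hdetA : ∀ n : ℤ, (A n).det = 1 := by
      intro n; rw [hA, Matrix.det_fin_two]; simp
    -- norm bounds on the transfer matrices
    have hEc : ‖(E : ℂ)‖ ≤ 4 * Real.exp K := by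
      rw [Complex.norm_real, Real.norm_eq_abs]; exact hE
    have haN : ∀ n : ℤ, ‖a n‖ ≤ 6 * Real.exp K := by
      intro n
      rw [ha]
      calc ‖((pot f K ω (θ + n * ω) : ℝ) : ℂ) - (E : ℂ)‖
          ≤ ‖((pot f K ω (θ + n * ω) : ℝ) : ℂ)‖ + ‖(E : ℂ)‖ := norm_sub_le _ _
        _ ≤ 2 * Real.exp K + 4 * Real.exp K := by
            refine add_le_add ?_ hEc
            rw [Complex.norm_real, Real.norm_eq_abs]
            exact pot_bd hf_bd hK ω _
        _ = 6 * Real.exp K := by ring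
    have hexp7 : (7 : ℝ) ≤ Real.exp (2 * K) := by
      have h1 := Real.exp_one_gt_d9
      have h2 : Real.exp 2 ≤ Real.exp (2 * K) := Real.exp_le_exp.2 (by linarith)
      have h3 : Real.exp 2 = Real.exp 1 * Real.exp 1 := by
        rw [← Real.exp_add]; norm_num
      nlinarith
    have hexpK1 : (1 : ℝ) ≤ Real.exp K := Real.one_le_exp (by positivity)
    have hAN : ∀ n : ℤ, ‖A n‖ ≤ Real.exp (3 * K) := by
      intro n
      rw [hA, gnormA, max_le_iff]
      have e30 : Real.exp (3 * K) = Real.exp K * Real.exp (2 * K) := by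
        rw [← Real.exp_add]; ring_nf
      have := haN n
      constructor
      · nlinarith
      · nlinarith
    -- decay of the solution
    have hsum : Summable (fun n : ℤ => ‖u n‖ ^ (2 : ℝ)) := by
      have h := (lp.memℓp u).summable (by norm_num)
      simpa using h
    have htend := hsum.tendsto_cofinite_zero
    have hev : ∀ᶠ n in Filter.cofinite, ‖u n‖ ^ (2 : ℝ) < (c / 24) ^ (2 : ℝ) :=
      htend.eventually_lt_const (by positivity)
    have husmall : ∀ᶠ n in Filter.cofinite, ‖u n‖ ≤ c / 24 := by
      filter_upwards [hev] with n hn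
      by_contra hcon
      push_neg at hcon
      have h1 : (c / 24 : ℝ) ^ (2 : ℝ) ≤ ‖u n‖ ^ (2 : ℝ) :=
        Real.rpow_le_rpow (by positivity) (le_of_lt hcon) (by norm_num)
      linarith
    have hfin : {n : ℤ | ¬ ‖u n‖ ≤ c / 24}.Finite := Filter.eventually_cofinite.mp husmall
    obtain ⟨b, hb⟩ := (hfin.image Int.natAbs).bddAbove
    have hN : ∀ n : ℤ, b + 1 ≤ n.natAbs → ‖u n‖ ≤ c / 24 := by
      intro n hn
      by_contra hcon
      have hmem : n.natAbs ∈ Int.natAbs '' {n : ℤ | ¬ ‖u n‖ ≤ c / 24} := ⟨n, hcon, rfl⟩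
      have := hb hmem
      omega
    -- choice of q
    unfold betaExp at hβ
    have hfreq : ∃ᶠ q in atTop, ((40 * K : ℝ) : EReal) <
        (if distToInt ((q : ℕ) * ω) = 0 then (⊤ : EReal)
          else ((-Real.log (distToInt ((q : ℕ) * ω)) / (q : ℕ) : ℝ) : EReal)) :=
      Filter.frequently_lt_of_lt_limsup (by isBoundedDefault) hβ
    obtain ⟨q, hq1, hq2⟩ := (hfreq.and_eventually (Filter.eventually_ge_atTop (b + 2))).exists
    have hqpos : 1 ≤ q := by omega
    have hqR : (0 : ℝ) < (q : ℝ) := by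
      have : (0 : ℕ) < q := by omega
      exact_mod_cast this
    have hdne : distToInt ((q : ℕ) * ω) ≠ 0 := by
      intro h0
      unfold distToInt at h0
      have he : ((q : ℕ) : ℝ) * ω - round (((q : ℕ) : ℝ) * ω) = 0 := abs_eq_zero.1 h0
      apply hω
      refine ⟨((round (((q : ℕ) : ℝ) * ω) : ℤ) : ℚ) / (q : ℚ), ?_⟩
      push_cast
      field_simp
      linarith
    rw [if_neg hdne] at hq1
    have hq1' : (40 * K : ℝ) < -Real.log (distToInt ((q : ℕ) * ω)) / (q : ℕ) := by
      exact_mod_cast hq1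
    have hd0 : 0 < distToInt ((q : ℕ) * ω) := by
      have h0 : 0 ≤ distToInt ((q : ℕ) * ω) := by unfold distToInt; positivity
      exact lt_of_le_of_ne h0 (Ne.symm hdne)
    have hlog : Real.log (distToInt ((q : ℕ) * ω)) < -(40 * K * q) := by
      rw [lt_div_iff₀ hqR] at hq1'
      nlinarith [hq1']
    have hdexp : distToInt ((q : ℕ) * ω) ≤ Real.exp (-(40 * K * q)) :=
      le_of_lt ((Real.log_lt_iff_lt_exp hd0).1 hlog)
    -- almost-periodicity of the potential
    have hpotp : ∀ x : ℝ,
        |pot f K ω (x + (q : ℝ) * ω) - pot f K ω x|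
          ≤ 2 * K * Real.exp K * distToInt ((q : ℕ) * ω) := by
      intro x
      have e : x + (q : ℝ) * ω
          = (x + ((q : ℝ) * ω - round ((q : ℝ) * ω))) + ((round ((q : ℝ) * ω) : ℤ) : ℝ) := by
        push_cast; ring
      rw [e, pot_per hf_per ω _ _]
      have h := pot_lip hf_C1 hf_bd hf_bd' hK ω (x + ((q : ℝ) * ω - round ((q : ℝ) * ω))) x
      have e2 : x + ((q : ℝ) * ω - round ((q : ℝ) * ω)) - x = (q : ℝ) * ω - round ((q : ℝ) * ω) := by
        ring
      rw [e2] at h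
      unfold distToInt
      exact h
    have hpotm : ∀ x : ℝ,
        |pot f K ω (x - (q : ℝ) * ω) - pot f K ω x|
          ≤ 2 * K * Real.exp K * distToInt ((q : ℕ) * ω) := by
      intro x
      have e : x - (q : ℝ) * ω
          = (x - ((q : ℝ) * ω - round ((q : ℝ) * ω))) + ((-round ((q : ℝ) * ω) : ℤ) : ℝ) := by
        push_cast; ring
      rw [e, pot_per hf_per ω _ _]
      have h := pot_lip hf_C1 hf_bd hf_bd' hK ω (x - ((q : ℝ) * ω - round ((q : ℝ) * ω))) x
      have e2 : x - ((q : ℝ) * ω - round ((q : ℝ) * ω)) - x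
          = -((q : ℝ) * ω - round ((q : ℝ) * ω)) := by ring
      rw [e2, abs_neg] at h
      unfold distToInt
      exact h
    -- matrix difference bounds
    have hadiff : ∀ (s j : ℤ), |(s : ℝ) * ω - ((s : ℝ)) * ω| = 0 → True := fun _ _ _ => trivial
    have hAd : ∀ (s : ℤ), (∀ x : ℝ, |pot f K ω (x + (s : ℝ) * ω) - pot f K ω x|
          ≤ 2 * K * Real.exp K * distToInt ((q : ℕ) * ω)) →
        ∀ j : ℤ, ‖A (s + j) - A ((0 : ℤ) + j)‖
          ≤ 2 * K * Real.exp K * distToInt ((q : ℕ) * ω) := by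
      intro s hs j
      have ea : a (s + j) - a j
          = ((pot f K ω ((θ + (j : ℝ) * ω) + (s : ℝ) * ω) - pot f K ω (θ + (j : ℝ) * ω) : ℝ) : ℂ) := by
        rw [ha, ha]
        push_cast
        have e : θ + ((s : ℝ) + (j : ℝ)) * ω = (θ + (j : ℝ) * ω) + (s : ℝ) * ω := by ring
        rw [e]
        ring
      have hsub : A (s + j) - A ((0 : ℤ) + j) = !![a (s + j) - a j, 0; 0, 0] := by
        rw [zero_add, hA, hA]
        ext i l
        fin_cases i <;> fin_cases l <;> simp
      rw [hsub, gnorm_single, ea, Complex.norm_real, Real.norm_eq_abs]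
      exact hs (θ + (j : ℝ) * ω)
    have hAdp : ∀ j : ℤ, ‖A ((q : ℤ) + j) - A ((0 : ℤ) + j)‖
        ≤ 2 * K * Real.exp K * distToInt ((q : ℕ) * ω) := by
      apply hAd
      intro x
      have h := hpotp x
      have e : x + (((q : ℤ) : ℤ) : ℝ) * ω = x + ((q : ℕ) : ℝ) * ω := by push_cast; ring
      rw [e]
      exact h
    have hAdm : ∀ j : ℤ, ‖A (-(q : ℤ) + j) - A ((0 : ℤ) + j)‖
        ≤ 2 * K * Real.exp K * distToInt ((q : ℕ) * ω) := by
      apply hAd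
      intro x
      have h := hpotm x
      have e : x + ((-(q:ℤ) : ℤ) : ℝ) * ω = x - ((q : ℕ) : ℝ) * ω := by push_cast; ring
      rw [e]
      exact h
    -- the three transfer matrices over blocks of length q
    have hMq1 : (1 : ℝ) ≤ Real.exp (3 * K) := Real.one_le_exp (by positivity)
    have hδ0 : (0 : ℝ) ≤ 2 * K * Real.exp K * distToInt ((q : ℕ) * ω) := by positivity
    have hTT' := gTPr_sub A 0 (q : ℤ) (Real.exp (3 * K))
      (2 * K * Real.exp K * distToInt ((q : ℕ) * ω)) hMq1 hδ0 hAN hAdp q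
    have hTT'' := gTPr_sub A 0 (-(q : ℤ)) (Real.exp (3 * K))
      (2 * K * Real.exp K * distToInt ((q : ℕ) * ω)) hMq1 hδ0 hAN hAdm q
    obtain ⟨hnum1, hnum2⟩ := gnumer hK hqpos (le_of_lt hd0) hdexp
    have hT'T : ‖gTPr A (q : ℤ) q - gTPr A 0 q‖ ≤ Real.exp (-(33 * K * q)) :=
      le_trans hTT' hnum1
    have hT''T : ‖gTPr A (-(q : ℤ)) q - gTPr A 0 q‖ ≤ Real.exp (-(33 * K * q)) :=
      le_trans hTT'' hnum1
    -- transfer identities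
    have hvq : (gTPr A 0 q).mulVec (v 0) = v (q : ℤ) := by
      have h := gTPr_mulVec A v hstep 0 q; rwa [zero_add] at h
    have hv2q : (gTPr A (q : ℤ) q).mulVec (v (q : ℤ)) = v ((q : ℤ) + (q : ℤ)) :=
      gTPr_mulVec A v hstep (q : ℤ) q
    have hvm : (gTPr A (-(q : ℤ)) q).mulVec (v (-(q : ℤ))) = v 0 := by
      have h := gTPr_mulVec A v hstep (-(q : ℤ)) q
      rwa [neg_add_cancel] at h
    -- smallness of far-away vectors
    have hvsmall : ∀ m : ℤ, b + 1 ≤ m.natAbs → b + 1 ≤ (m - 1).natAbs → ‖v m‖ ≤ c / 24 := by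
      intro m h1 h2
      rw [hv]
      rw [pi_norm_le_iff_of_nonneg (by positivity)]
      intro i
      fin_cases i
      · simpa using hN m h1
      · simpa using hN (m - 1) h2
    have hsq : ‖v (q : ℤ)‖ ≤ c / 24 := by
      apply hvsmall <;> omega
    have hs2q : ‖v ((q : ℤ) + (q : ℤ))‖ ≤ c / 24 := by
      apply hvsmall <;> omega
    have hsmq : ‖v (-(q : ℤ))‖ ≤ c / 24 := by
      apply hvsmall <;> omega
    have hErr : Real.exp (-(33 * K * q)) ≤ 1 / 12 := hnum2
    have hErr0 : (0:ℝ) ≤ Real.exp (-(33 * K * q)) := (Real.exp_pos _).le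
    -- the Gordon dichotomy
    rcases le_total ‖(gTPr A 0 q).trace‖ 1 with hts | hts
    · -- small trace: use the double block
      have hch := gch2 (gTPr A 0 q) (gTPr_det A hdetA 0 q)
      have e2 : (gTPr A 0 q).mulVec (v (q : ℤ))
          = (gTPr A 0 q).trace • v (q : ℤ) - v 0 := by
        rw [← hvq, Matrix.mulVec_mulVec, hch, Matrix.sub_mulVec, Matrix.smul_mulVec,
          Matrix.one_mulVec, hvq]
      have e1 : v ((q : ℤ) + (q : ℤ)) = (gTPr A 0 q).trace • v (q : ℤ) - v 0
          + (gTPr A (q : ℤ) q - gTPr A 0 q).mulVec (v (q : ℤ)) := by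
        rw [← hv2q, show gTPr A (q : ℤ) q
            = (gTPr A (q : ℤ) q - gTPr A 0 q) + gTPr A 0 q by abel,
          Matrix.add_mulVec, e2]
        abel
      have e3 : v 0 = (gTPr A 0 q).trace • v (q : ℤ)
          + (gTPr A (q : ℤ) q - gTPr A 0 q).mulVec (v (q : ℤ)) - v ((q : ℤ) + (q : ℤ)) := by
        rw [e1]; abel
      have hn1 : ‖(gTPr A 0 q).trace • v (q : ℤ)‖ ≤ 1 * (c / 24) := by
        rw [norm_smul]
        exact mul_le_mul hts hsq (norm_nonneg _) zero_le_one
      have hn2 : ‖(gTPr A (q : ℤ) q - gTPr A 0 q).mulVec (v (q : ℤ))‖ ≤ (1 / 12) * (c / 24) := by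
        calc ‖(gTPr A (q : ℤ) q - gTPr A 0 q).mulVec (v (q : ℤ))‖
            ≤ ‖gTPr A (q : ℤ) q - gTPr A 0 q‖ * ‖v (q : ℤ)‖ :=
              Matrix.linfty_opNorm_mulVec _ _
          _ ≤ (1 / 12) * (c / 24) := by
              apply mul_le_mul (le_trans hT'T hErr) hsq (norm_nonneg _) (by norm_num)
      have hfin1 : ‖v (0:ℤ)‖ ≤ ‖(gTPr A 0 q).trace • v (q : ℤ)‖
          + ‖(gTPr A (q : ℤ) q - gTPr A 0 q).mulVec (v (q : ℤ))‖ + ‖v ((q : ℤ) + (q : ℤ))‖ := by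
        rw [e3]
        have t1 := norm_sub_le ((gTPr A 0 q).trace • v (q : ℤ)
          + (gTPr A (q : ℤ) q - gTPr A 0 q).mulVec (v (q : ℤ))) (v ((q : ℤ) + (q : ℤ)))
        have t2 := norm_add_le ((gTPr A 0 q).trace • v (q : ℤ))
          ((gTPr A (q : ℤ) q - gTPr A 0 q).mulVec (v (q : ℤ)))
        linarith
      linarith [hcdef, hfin1, hn1, hn2, hs2q, hc]
    · -- large trace: use the backward block
      have hsinv := gsinv2 (gTPr A (-(q : ℤ)) q) (gTPr_det A hdetA (-(q : ℤ)) q)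
      have e1 : ((gTPr A (-(q : ℤ)) q).trace • (1 : GM2) - gTPr A (-(q : ℤ)) q).mulVec (v 0)
          = v (-(q : ℤ)) := by
        rw [← hvm, Matrix.mulVec_mulVec, hsinv, Matrix.one_mulVec]
      have e2 : (gTPr A (-(q : ℤ)) q).trace • (1 : GM2) - gTPr A (-(q : ℤ)) q
          = ((gTPr A 0 q).trace • (1 : GM2) - gTPr A 0 q)
            + ((gTPr A (-(q : ℤ)) q - gTPr A 0 q).trace • (1 : GM2)
                - (gTPr A (-(q : ℤ)) q - gTPr A 0 q)) := by
        rw [Matrix.trace_sub, sub_smul]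
        abel
      have hDn : ‖(gTPr A (-(q : ℤ)) q - gTPr A 0 q).trace • (1 : GM2)
          - (gTPr A (-(q : ℤ)) q - gTPr A 0 q)‖ ≤ 3 * Real.exp (-(33 * K * q)) := by
        calc ‖(gTPr A (-(q : ℤ)) q - gTPr A 0 q).trace • (1 : GM2)
            - (gTPr A (-(q : ℤ)) q - gTPr A 0 q)‖
            ≤ ‖(gTPr A (-(q : ℤ)) q - gTPr A 0 q).trace • (1 : GM2)‖
              + ‖gTPr A (-(q : ℤ)) q - gTPr A 0 q‖ := norm_sub_le _ _
          _ ≤ 2 * ‖gTPr A (-(q : ℤ)) q - gTPr A 0 q‖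
              + ‖gTPr A (-(q : ℤ)) q - gTPr A 0 q‖ := by
              have hns : ‖(gTPr A (-(q : ℤ)) q - gTPr A 0 q).trace • (1 : GM2)‖
                  = ‖(gTPr A (-(q : ℤ)) q - gTPr A 0 q).trace‖ := by
                rw [norm_smul, norm_one, mul_one]
              rw [hns]
              have := gtrace_le (gTPr A (-(q : ℤ)) q - gTPr A 0 q)
              linarith
          _ ≤ 3 * Real.exp (-(33 * K * q)) := by linarith
      have e3 : v (-(q : ℤ)) = (gTPr A 0 q).trace • v 0 - v (q : ℤ)
          + ((gTPr A (-(q : ℤ)) q - gTPr A 0 q).trace • (1 : GM2)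
              - (gTPr A (-(q : ℤ)) q - gTPr A 0 q)).mulVec (v 0) := by
        rw [← e1, e2, Matrix.add_mulVec, Matrix.sub_mulVec, Matrix.smul_mulVec,
          Matrix.one_mulVec, hvq]
      have e4 : (gTPr A 0 q).trace • v 0 = v (-(q : ℤ)) + v (q : ℤ)
          - ((gTPr A (-(q : ℤ)) q - gTPr A 0 q).trace • (1 : GM2)
              - (gTPr A (-(q : ℤ)) q - gTPr A 0 q)).mulVec (v 0) := by
        rw [e3]; abel
      have hlow : 1 * c ≤ ‖(gTPr A 0 q).trace • v 0‖ := by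
        rw [norm_smul]
        exact mul_le_mul hts le_rfl (le_of_lt hc) (norm_nonneg _)
      have hup : ‖(gTPr A 0 q).trace • v 0‖
          ≤ c / 24 + c / 24 + 3 * Real.exp (-(33 * K * q)) * c := by
        rw [e4]
        have t1 := norm_sub_le (v (-(q : ℤ)) + v (q : ℤ))
          (((gTPr A (-(q : ℤ)) q - gTPr A 0 q).trace • (1 : GM2)
            - (gTPr A (-(q : ℤ)) q - gTPr A 0 q)).mulVec (v 0))
        have t2 := norm_add_le (v (-(q : ℤ))) (v (q : ℤ))
        have t3 : ‖(((gTPr A (-(q : ℤ)) q - gTPr A 0 q).trace • (1 : GM2)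
            - (gTPr A (-(q : ℤ)) q - gTPr A 0 q))).mulVec (v 0)‖
            ≤ 3 * Real.exp (-(33 * K * q)) * c := by
          calc ‖(((gTPr A (-(q : ℤ)) q - gTPr A 0 q).trace • (1 : GM2)
              - (gTPr A (-(q : ℤ)) q - gTPr A 0 q))).mulVec (v 0)‖
              ≤ ‖((gTPr A (-(q : ℤ)) q - gTPr A 0 q).trace • (1 : GM2)
                - (gTPr A (-(q : ℤ)) q - gTPr A 0 q))‖ * ‖v 0‖ :=
                Matrix.linfty_opNorm_mulVec _ _
            _ ≤ 3 * Real.exp (-(33 * K * q)) * c := by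
                apply mul_le_mul hDn le_rfl (norm_nonneg _) (by positivity)
        linarith
      have h3e : 3 * Real.exp (-(33 * K * q)) * c ≤ 3 * (1/12) * c := by
        have : 3 * Real.exp (-(33 * K * q)) ≤ 3 * (1/12) := by linarith
        exact mul_le_mul_of_nonneg_right this (le_of_lt hc)
      linarith
  refine ⟨key, ?_⟩
  intro H hH u huE
  apply key u
  intro n
  rw [← hH u n, huE]
  have : ((E : ℂ) • u) n = (E : ℂ) * u n := by
    rw [lp.coeFn_smul]
    simp
  rw [this]
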